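/- Let r ∈ ℝⁿ, let C ∈ ℝ^{k×n} and d ∈ ℝ^k, and let F := {x ∈ {0,1}ⁿ : C x ≤ d} be nonempty. Suppose A ∈ ℝ^{p×n}, B ∈ ℝ^{p×q} and b ∈ ℝ^p give an extended formulation of conv(F), i.e. conv(F) = {x ∈ ℝⁿ : ∃ z ∈ ℝ^q with A x + B z ≤ b}. Then max{ (Σ_{j∈N} r_j u_j x_j)/(u₀ + Σ_{j∈N} u_j x_j) : x ∈ F } = sup{ Σ_{j∈N} r_j u_j y_j : ∃ z ∈ ℝ^q with A y + B z ≤ b·y₀, y₀ ≥ 0, and u₀y₀ + Σ_{j∈N} u_j y_j = 1 }. -/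

import Mathlib

/-- LP formulation for constrained assortment optimization under MNL from an extended
formulation of the convex hull of the feasible region. -/
theorem stmt17 (n k p q : ℕ) (hn : 1 ≤ n) (u0 : ℝ) (hu0 : 0 < u0)
    (u : Fin n → ℝ) (hu : ∀ j, 0 ≤ u j) (r : Fin n → ℝ)
    (C : Matrix (Fin k) (Fin n) ℝ) (d : Fin k → ℝ)
    (A : Matrix (Fin p) (Fin n) ℝ) (B : Matrix (Fin p) (Fin q) ℝ) (b : Fin p → ℝ)
    (F : Set (Fin n → ℝ))
    (hFdef : F = {x : Fin n → ℝ |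
      (∀ j, x j = 0 ∨ x j = 1) ∧ ∀ i, C.mulVec x i ≤ d i})
    (hFne : F.Nonempty)
    (hconv : convexHull ℝ F =
      {x : Fin n → ℝ | ∃ z : Fin q → ℝ, ∀ i, A.mulVec x i + B.mulVec z i ≤ b i}) :
    sSup {v : ℝ | ∃ x ∈ F,
        v = (∑ j, r j * u j * x j) / (u0 + ∑ j, u j * x j)} =
    sSup {v : ℝ | ∃ (y0 : ℝ) (y : Fin n → ℝ) (z : Fin q → ℝ),
        (∀ i, A.mulVec y i + B.mulVec z i ≤ b i * y0) ∧ 0 ≤ y0 ∧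
        u0 * y0 + ∑ j, u j * y j = 1 ∧ v = ∑ j, r j * u j * y j} := by
  set g : (Fin n → ℝ) → ℝ := fun x => ∑ j, r j * u j * x j with hg
  set h : (Fin n → ℝ) → ℝ := fun x => u0 + ∑ j, u j * x j with hh
  set L : Set ℝ := {v : ℝ | ∃ x ∈ F, v = g x / h x} with hL
  set R : Set ℝ := {v : ℝ | ∃ (y0 : ℝ) (y : Fin n → ℝ) (z : Fin q → ℝ),
        (∀ i, A.mulVec y i + B.mulVec z i ≤ b i * y0) ∧ 0 ≤ y0 ∧
        u0 * y0 + ∑ j, u j * y j = 1 ∧ v = ∑ j, r j * u j * y j} with hR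
  -- F lies in the unit box
  have hbox : F ⊆ Set.pi Set.univ (fun _ : Fin n => Set.Icc (0:ℝ) 1) := by
    rw [hFdef]; intro x hx j _
    rcases hx.1 j with h0 | h1
    · simp [h0]
    · simp [h1]
  have hconvbox : convexHull ℝ F ⊆ Set.pi Set.univ (fun _ : Fin n => Set.Icc (0:ℝ) 1) :=
    convexHull_min hbox (convex_pi (fun _ _ => convex_Icc 0 1))
  -- h is positive on the box
  have hhpos : ∀ x ∈ Set.pi Set.univ (fun _ : Fin n => Set.Icc (0:ℝ) 1), 0 < h x := by
    intro x hx
    have : (0:ℝ) ≤ ∑ j, u j * x j :=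
      Finset.sum_nonneg fun j _ => mul_nonneg (hu j) (hx j (Set.mem_univ j)).1
    simp only [hh]; linarith
  -- F is finite
  have hFfin : F.Finite := by
    have hsub : F ⊆ Set.pi Set.univ (fun _ : Fin n => ({0, 1} : Set ℝ)) := by
      rw [hFdef]; intro x hx j _
      rcases hx.1 j with h0 | h0 <;> simp [h0]
    exact (Set.Finite.pi (fun _ => (Set.finite_singleton (1:ℝ)).insert 0)).subset hsub
  have hLbdd : BddAbove L := by
    have : L ⊆ (fun x => g x / h x) '' F := by
      rintro v ⟨x, hx, rfl⟩; exact ⟨x, hx, rfl⟩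
    exact ((hFfin.image _).subset this).bddAbove
  have hLne : L.Nonempty := by
    obtain ⟨x, hx⟩ := hFne
    exact ⟨g x / h x, x, hx, rfl⟩
  -- linearity helpers
  have hglin : ∀ (a b : ℝ) (w1 w2 : Fin n → ℝ), g (a • w1 + b • w2) = a * g w1 + b * g w2 := by
    intro a b w1 w2
    simp only [hg, Pi.add_apply, Pi.smul_apply, smul_eq_mul, Finset.mul_sum]
    rw [← Finset.sum_add_distrib]
    exact Finset.sum_congr rfl fun j _ => by ring
  -- forward inclusion L ⊆ R
  have hLR : L ⊆ R := by
    rintro v ⟨x, hx, rfl⟩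
    have hxbox := hbox hx
    have hhx : 0 < h x := hhpos x hxbox
    obtain ⟨z, hz⟩ : ∃ z : Fin q → ℝ, ∀ i, A.mulVec x i + B.mulVec z i ≤ b i := by
      have : x ∈ convexHull ℝ F := subset_convexHull ℝ F hx
      rwa [hconv] at this
    refine ⟨(h x)⁻¹, (h x)⁻¹ • x, (h x)⁻¹ • z, ?_, by positivity, ?_, ?_⟩
    · intro i
      have h1 : A.mulVec ((h x)⁻¹ • x) i = (h x)⁻¹ * A.mulVec x i := by
        rw [Matrix.mulVec_smul]; rfl
      have h2 : B.mulVec ((h x)⁻¹ • z) i = (h x)⁻¹ * B.mulVec z i := by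
        rw [Matrix.mulVec_smul]; rfl
      rw [h1, h2, ← mul_add]
      calc (h x)⁻¹ * (A.mulVec x i + B.mulVec z i) ≤ (h x)⁻¹ * b i :=
            mul_le_mul_of_nonneg_left (hz i) (by positivity)
        _ = b i * (h x)⁻¹ := mul_comm _ _
    · have : ∑ j, u j * ((h x)⁻¹ • x) j = (h x)⁻¹ * ∑ j, u j * x j := by
        rw [Finset.mul_sum]
        exact Finset.sum_congr rfl fun j _ => by simp [Pi.smul_apply]; ring
      rw [this, mul_comm u0, ← mul_add]
      exact inv_mul_cancel₀ (hhpos x hxbox).ne'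
    · have : ∑ j, r j * u j * ((h x)⁻¹ • x) j = (h x)⁻¹ * ∑ j, r j * u j * x j := by
        rw [Finset.mul_sum]
        exact Finset.sum_congr rfl fun j _ => by simp [Pi.smul_apply]; ring
      rw [this, div_eq_inv_mul]
  -- every element of R is ≤ sSup L
  have hub : ∀ v ∈ R, v ≤ sSup L := by
    rintro v ⟨y0, y, z, hAB, hy0, hnorm, rfl⟩
    -- y0 = 0 is impossible
    rcases eq_or_lt_of_le hy0 with hy0z | hy0pos
    · exfalso
      obtain ⟨xb, hxb⟩ := hFne
      obtain ⟨zb, hzb⟩ : ∃ zb : Fin q → ℝ, ∀ i, A.mulVec xb i + B.mulVec zb i ≤ b i := by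
        have : xb ∈ convexHull ℝ F := subset_convexHull ℝ F hxb
        rwa [hconv] at this
      have hyle : ∀ j, y j ≤ 0 := by
        intro j
        by_contra hyj
        push_neg at hyj
        set t : ℝ := 2 / y j with ht
        have htpos : 0 < t := by positivity
        have hmem : xb + t • y ∈ convexHull ℝ F := by
          rw [hconv]
          refine ⟨zb + t • z, fun i => ?_⟩
          have h1 : A.mulVec (xb + t • y) i = A.mulVec xb i + t * A.mulVec y i := by
            rw [Matrix.mulVec_add, Matrix.mulVec_smul]; rfl
          have h2 : B.mulVec (zb + t • z) i = B.mulVec zb i + t * B.mulVec z i := by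
            rw [Matrix.mulVec_add, Matrix.mulVec_smul]; rfl
          have h3 := hAB i
          rw [← hy0z, mul_zero] at h3
          have h4 : t * (A.mulVec y i + B.mulVec z i) ≤ 0 :=
            mul_nonpos_of_nonneg_of_nonpos htpos.le h3
          have h5 := hzb i
          rw [h1, h2]; nlinarith
        have hj := (hconvbox hmem) j (Set.mem_univ j)
        have hxbj := (hbox hxb) j (Set.mem_univ j)
        have : xb j + t * y j ≤ 1 := by simpa using hj.2
        have : t * y j = 2 := by rw [ht]; field_simp
        linarith [hxbj.1]
      have : ∑ j, u j * y j ≤ 0 :=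
        Finset.sum_nonpos fun j _ => mul_nonpos_of_nonneg_of_nonpos (hu j) (hyle j)
      rw [← hy0z, mul_zero, zero_add] at hnorm
      linarith
    · -- y0 > 0 : set x = y0⁻¹ • y ∈ conv F
      set x : Fin n → ℝ := y0⁻¹ • y with hx
      have hxmem : x ∈ convexHull ℝ F := by
        rw [hconv]
        refine ⟨y0⁻¹ • z, fun i => ?_⟩
        have h1 : A.mulVec x i = y0⁻¹ * A.mulVec y i := by
          rw [hx, Matrix.mulVec_smul]; rfl
        have h2 : B.mulVec (y0⁻¹ • z) i = y0⁻¹ * B.mulVec z i := by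
          rw [Matrix.mulVec_smul]; rfl
        rw [h1, h2, ← mul_add]
        calc y0⁻¹ * (A.mulVec y i + B.mulVec z i) ≤ y0⁻¹ * (b i * y0) :=
              mul_le_mul_of_nonneg_left (hAB i) (by positivity)
          _ = b i := by field_simp
      -- relate sums over y to sums over x
      have hsum1 : ∑ j, u j * y j = y0 * ∑ j, u j * x j := by
        rw [Finset.mul_sum]
        exact Finset.sum_congr rfl fun j _ => by
          simp only [hx, Pi.smul_apply, smul_eq_mul]
          field_simp
      have hsum2 : ∑ j, r j * u j * y j = y0 * g x := by
        rw [hg, Finset.mul_sum]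
        exact Finset.sum_congr rfl fun j _ => by
          simp only [hx, Pi.smul_apply, smul_eq_mul]
          field_simp
      have hhx : y0 * h x = 1 := by
        simp only [hh]; rw [mul_add, ← hsum1]; linarith
      have hhxpos : 0 < h x := by nlinarith
      -- mediant bound: g x ≤ sSup L * h x on conv F
      have hkey : g x ≤ sSup L * h x := by
        have hS : convexHull ℝ F ⊆ {w : Fin n → ℝ | g w ≤ sSup L * h w} := by
          apply convexHull_min
          · intro w hw
            have hhw : 0 < h w := hhpos w (hbox hw)
            have : g w / h w ≤ sSup L := le_csSup hLbdd ⟨w, hw, rfl⟩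
            have := (div_le_iff₀ hhw).mp this
            exact this
          · intro w1 hw1 w2 hw2 a c ha hc hac
            simp only [Set.mem_setOf_eq] at *
            have e1 : g (a • w1 + c • w2) = a * g w1 + c * g w2 := hglin a c w1 w2
            have e2 : h (a • w1 + c • w2) = a * h w1 + c * h w2 := by
              have hs : ∑ j, u j * ((a • w1 + c • w2) j)
                  = a * (∑ j, u j * w1 j) + c * ∑ j, u j * w2 j := by
                rw [Finset.mul_sum, Finset.mul_sum, ← Finset.sum_add_distrib]
                exact Finset.sum_congr rfl fun j _ => by
                  simp only [Pi.add_apply, Pi.smul_apply, smul_eq_mul]; ring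
              have hd : h (a • w1 + c • w2) = u0 + ∑ j, u j * ((a • w1 + c • w2) j) := rfl
              rw [hd, hs, show h w1 = u0 + ∑ j, u j * w1 j from rfl,
                show h w2 = u0 + ∑ j, u j * w2 j from rfl]
              nlinarith [hac]
            rw [e1, e2]
            nlinarith [mul_le_mul_of_nonneg_left hw1 ha,
              mul_le_mul_of_nonneg_left hw2 hc]
        exact hS hxmem
      have : y0 * g x ≤ y0 * (sSup L * h x) :=
        mul_le_mul_of_nonneg_left hkey hy0pos.le
      rw [hsum2]
      calc y0 * g x ≤ y0 * (sSup L * h x) := this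
        _ = sSup L * (y0 * h x) := by ring
        _ = sSup L := by rw [hhx, mul_one]
  exact le_antisymm (csSup_le_csSup ⟨sSup L, hub⟩ hLne hLR)
    (csSup_le (hLne.mono hLR) hub)
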